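/- Let (g, [·,·], α) be a regular hom-Lie algebra (α an algebra automorphism) and s any integer. Then the map ad_s: g → gl(g) defined by ad_s(u)(v) = [α^s(u), v] is a representation of g on itself with respect to α, i.e., ad_s(α(u))∘α = α∘ad_s(u) and ad_s([u,v])∘α = ad_s(α(u))∘ad_s(v) − ad_s(α(v))∘ad_s(u) for all u, v ∈ g. -/

import Mathlib

/-- A regular hom-Lie algebra: a real vector space with a skew-symmetric bilinear
bracket and a linear automorphism `e` (the structure map `α`) satisfying the
hom-Jacobi identity, with `e` an algebra automorphism. -/
structure RegularHomLieAlgebra (g : Type*) [AddCommGroup g] [Module ℝ g] where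
  bracket : g →ₗ[ℝ] g →ₗ[ℝ] g
  e : g ≃ₗ[ℝ] g
  skew : ∀ u v, bracket u v = - bracket v u
  jacobi : ∀ u v w,
    bracket (e u) (bracket v w) + bracket (e v) (bracket w u)
      + bracket (e w) (bracket u v) = 0
  mult : ∀ u v, e (bracket u v) = bracket (e u) (e v)

/-- `α^s` commutes with `α`. -/
lemma RegularHomLieAlgebra.pow_comm {g : Type*} [AddCommGroup g] [Module ℝ g]
    (L : RegularHomLieAlgebra g) (s : ℤ) (u : g) :
    (L.e ^ s) (L.e u) = L.e ((L.e ^ s) u) := by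
  have h : L.e ^ s * L.e = L.e * L.e ^ s := by
    rw [← zpow_one_add, ← zpow_add_one, add_comm]
  calc (L.e ^ s) (L.e u) = (L.e ^ s * L.e) u := rfl
    _ = (L.e * L.e ^ s) u := by rw [h]
    _ = L.e ((L.e ^ s) u) := rfl

/-- `α⁻¹` is multiplicative. -/
lemma RegularHomLieAlgebra.inv_mult {g : Type*} [AddCommGroup g] [Module ℝ g]
    (L : RegularHomLieAlgebra g) (u v : g) :
    L.e⁻¹ (L.bracket u v) = L.bracket (L.e⁻¹ u) (L.e⁻¹ v) := by
  have h := L.mult (L.e⁻¹ u) (L.e⁻¹ v)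
  have h1 : L.e (L.e⁻¹ u) = u := L.e.apply_symm_apply u
  have h2 : L.e (L.e⁻¹ v) = v := L.e.apply_symm_apply v
  rw [h1, h2] at h
  rw [← h]
  exact (L.e.symm_apply_apply _)

/-- `α^s` is multiplicative for any integer `s`. -/
lemma RegularHomLieAlgebra.zpow_mult {g : Type*} [AddCommGroup g] [Module ℝ g]
    (L : RegularHomLieAlgebra g) (s : ℤ) (u v : g) :
    (L.e ^ s) (L.bracket u v) = L.bracket ((L.e ^ s) u) ((L.e ^ s) v) := by
  induction s using Int.induction_on with
  | zero => simp
  | succ n ih =>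
      have h : L.e ^ ((n : ℤ) + 1) = L.e * L.e ^ (n : ℤ) := by
        rw [add_comm, zpow_one_add]
      have : ∀ w : g, (L.e ^ ((n : ℤ) + 1)) w = L.e ((L.e ^ (n : ℤ)) w) := by
        intro w; rw [h]; rfl
      rw [this, this, this, ih, L.mult]
  | pred n ih =>
      have h : L.e ^ (-(n : ℤ) - 1) = L.e⁻¹ * L.e ^ (-(n : ℤ)) := by
        rw [show (-(n : ℤ) - 1) = -1 + -(n : ℤ) by ring, zpow_add, zpow_neg_one]
      have : ∀ w : g, (L.e ^ (-(n : ℤ) - 1)) w = L.e⁻¹ ((L.e ^ (-(n : ℤ))) w) := by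
        intro w; rw [h]; rfl
      rw [this, this, this, ih, L.inv_mult]

/-- For any integer `s`, the map `ad_s(u)(v) = [α^s(u), v]` is a representation
of the regular hom-Lie algebra on itself with respect to `α`. -/
theorem alpha_s_adjoint_representation {g : Type*} [AddCommGroup g] [Module ℝ g]
    (L : RegularHomLieAlgebra g) (s : ℤ) :
    (∀ u v : g,
      L.bracket ((L.e ^ s) (L.e u)) (L.e v) = L.e (L.bracket ((L.e ^ s) u) v)) ∧
    (∀ u v w : g,
      L.bracket ((L.e ^ s) (L.bracket u v)) (L.e w)
        = L.bracket ((L.e ^ s) (L.e u)) (L.bracket ((L.e ^ s) v) w)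
          - L.bracket ((L.e ^ s) (L.e v)) (L.bracket ((L.e ^ s) u) w)) := by
  constructor
  · intro u v
    rw [L.pow_comm, L.mult]
  · intro u v w
    set a := (L.e ^ s) u
    set b := (L.e ^ s) v
    rw [L.zpow_mult, L.pow_comm, L.pow_comm]
    -- goal: [ [a,b], e w ] = [e a, [b, w]] - [e b, [a, w]]
    have hj := L.jacobi a b w
    have hsk1 : L.bracket (L.bracket a b) (L.e w)
        = - L.bracket (L.e w) (L.bracket a b) := L.skew _ _
    have hsk2 : L.bracket b w = - L.bracket w b := L.skew _ _
    have hsk3 : L.bracket w a = - L.bracket a w := L.skew _ _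
    have h1 : L.bracket (L.e a) (- L.bracket w b) = - L.bracket (L.e a) (L.bracket w b) :=
      map_neg _ _
    have h2 : L.bracket (L.e b) (- L.bracket a w) = - L.bracket (L.e b) (L.bracket a w) :=
      map_neg _ _
    rw [hsk1, hsk2, h1]
    rw [show L.bracket (L.e w) (L.bracket a b)
        = - (L.bracket (L.e a) (L.bracket b w) + L.bracket (L.e b) (L.bracket w a)) by
      exact eq_neg_of_add_eq_zero_right hj]
    rw [hsk2, hsk3, h1, map_neg]
    abel
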